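/- Let e be an idempotent transformation, g a permutation of {1,...,n} with e∘g singular, and f an idempotent with rank(f) = rank(e∘g). Then e∘g lies in e·⟨C_f⟩, the set of products of e with elements of the subsemigroup generated by the S_n-conjugates of f. In particular, e∘g ∈ ⟨C_e⟩. -/

import Mathlib

/-- The full transformation monoid on `{1,...,n}`, modeled as `Function.End (Fin n)`
(multiplication is composition). -/
abbrev Tn (n : ℕ) := Function.End (Fin n)

/-- A permutation viewed as a transformation. -/
def ofPerm {n : ℕ} (g : Equiv.Perm (Fin n)) : Tn n := ⇑g

/-- The rank of a transformation: the size of its image. -/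
def rnk {n : ℕ} (a : Tn n) : ℕ := (Finset.univ.image a).card

/-- The symmetric group embedded in `Tn n` as a set. -/
def perms (n : ℕ) : Set (Tn n) := Set.range (fun g : Equiv.Perm (Fin n) => ofPerm g)

/-- The `S_n`-conjugacy class of a transformation. -/
def conjClass {n : ℕ} (t : Tn n) : Set (Tn n) :=
  {s | ∃ g : Equiv.Perm (Fin n), s = ofPerm g⁻¹ * t * ofPerm g}

lemma exists_perm_extend {n : ℕ} (s : Finset (Fin n)) (j : Fin n → Fin n)
    (hj : Set.InjOn j s) : ∃ σ : Equiv.Perm (Fin n), ∀ x ∈ s, σ x = j x := by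
  classical
  set t : Finset (Fin n) := s.image j with ht
  have hcard : sᶜ.card = tᶜ.card := by
    rw [Finset.card_compl, Finset.card_compl, Finset.card_image_of_injOn hj]
  obtain κ := Finset.equivOfCardEq hcard
  set F : Fin n → Fin n := fun x => if h : x ∈ s then j x else
    (κ ⟨x, Finset.mem_compl.2 h⟩ : Fin n) with hF
  have hmem : ∀ x, (x ∈ s → F x ∈ t) ∧ (x ∉ s → F x ∈ tᶜ) := by
    intro x
    constructor
    · intro h; simp only [hF, dif_pos h]; exact Finset.mem_image_of_mem j h
    · intro h; simp only [hF, dif_neg h]; exact (κ ⟨x, Finset.mem_compl.2 h⟩).2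
  have hinj : Function.Injective F := by
    intro x y hxy
    by_cases hx : x ∈ s <;> by_cases hy : y ∈ s
    · simp only [hF, dif_pos hx, dif_pos hy] at hxy; exact hj hx hy hxy
    · exact absurd ((hmem x).1 hx) (by rw [hxy]; exact Finset.mem_compl.1 ((hmem y).2 hy))
    · exact absurd ((hmem y).1 hy) (by rw [← hxy]; exact Finset.mem_compl.1 ((hmem x).2 hx))
    · simp only [hF, dif_neg hx, dif_neg hy] at hxy
      exact Subtype.ext_iff.1 (κ.injective (Subtype.ext hxy))
  refine ⟨Equiv.ofBijective F (Finite.injective_iff_bijective.1 hinj), ?_⟩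
  intro x hx
  show F x = j x
  simp only [hF, dif_pos hx]

lemma fixes_image {n : ℕ} (f : Tn n) (hf : f * f = f) :
    ∀ b ∈ Finset.univ.image f, f b = b := by
  intro b hb
  obtain ⟨z, -, hz⟩ := Finset.mem_image.1 hb
  calc f b = (f * f) z := by rw [← hz]; rfl
  _ = b := by rw [hf, hz]

lemma conj_apply {n : ℕ} (f : Tn n) (σ : Equiv.Perm (Fin n)) (x : Fin n) :
    (ofPerm σ⁻¹ * f * ofPerm σ) x = σ⁻¹ (f (σ x)) := rfl

/-- Lemma A -/
lemma fix_lemma {n : ℕ} (f : Tn n) (hf : f * f = f) (S : Finset (Fin n))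
    (hS : S.card = rnk f) : ∃ c ∈ conjClass f, ∀ x ∈ S, c x = x := by
  classical
  have hc : S.card = (Finset.univ.image f).card := hS
  obtain κ := Finset.equivOfCardEq hc
  set j : Fin n → Fin n := fun x => if h : x ∈ S then (κ ⟨x, h⟩ : Fin n) else x with hj
  have hinj : Set.InjOn j S := by
    intro x hx' y hy' hxy
    have hx : x ∈ S := Finset.mem_coe.1 hx'
    have hy : y ∈ S := Finset.mem_coe.1 hy'
    simp only [hj, dif_pos hx, dif_pos hy] at hxy
    exact Subtype.ext_iff.1 (κ.injective (Subtype.ext hxy))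
  obtain ⟨σ, hσ⟩ := exists_perm_extend S j hinj
  refine ⟨ofPerm σ⁻¹ * f * ofPerm σ, ⟨σ, rfl⟩, ?_⟩
  intro x hx
  have h1 : σ x ∈ Finset.univ.image f := by
    rw [hσ x hx]; simp only [hj, dif_pos hx]; exact (κ ⟨x, hx⟩).2
  rw [conj_apply, fixes_image f hf _ h1]
  exact σ.symm_apply_apply x

/-- Lemma B -/
lemma move_lemma {n : ℕ} (f : Tn n) (hf : f * f = f) (hlt : rnk f < n)
    (S : Finset (Fin n)) (hS : S.card = rnk f) (u : Fin n) (hu : u ∈ S)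
    (v : Fin n) (hv : v ∉ S) :
    ∃ c ∈ conjClass f, c u = v ∧ ∀ x ∈ S, x ≠ u → c x = x := by
  classical
  set B : Finset (Fin n) := Finset.univ.image f with hB
  have hBne : Bᶜ.Nonempty := by
    rw [← Finset.card_pos, Finset.card_compl, Fintype.card_fin]
    have : B.card = rnk f := rfl
    omega
  obtain ⟨t, htc⟩ := hBne
  have ht : t ∉ B := Finset.mem_compl.1 htc
  set b0 : Fin n := f t with hb0
  have hb0B : b0 ∈ B := Finset.mem_image_of_mem f (Finset.mem_univ t)
  have hcard : (S.erase u).card = (B.erase b0).card := by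
    rw [Finset.card_erase_of_mem hu, Finset.card_erase_of_mem hb0B, hS]; rfl
  obtain κ := Finset.equivOfCardEq hcard
  set j : Fin n → Fin n := fun x =>
    if x = u then t else if x = v then b0 else
    if h : x ∈ S.erase u then (κ ⟨x, h⟩ : Fin n) else x with hj
  have hju : j u = t := by simp [hj]
  have hjv : j v = b0 := by
    have : v ≠ u := fun h => hv (h ▸ hu)
    simp [hj, this]
  have hjx : ∀ x (hx : x ∈ S.erase u), j x = (κ ⟨x, hx⟩ : Fin n) := by
    intro x hx
    have hx1 : x ≠ u := Finset.ne_of_mem_erase hx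
    have hx2 : x ≠ v := fun h => hv (h ▸ Finset.mem_of_mem_erase hx)
    simp only [hj, if_neg hx1, if_neg hx2, dif_pos hx]
  have hκmem : ∀ x (hx : x ∈ S.erase u), (κ ⟨x, hx⟩ : Fin n) ∈ B.erase b0 :=
    fun x hx => (κ ⟨x, hx⟩).2
  -- injectivity on insert v S
  have hinj : Set.InjOn j (↑(insert v S) : Set (Fin n)) := by
    intro x hx' y hy' hxy
    have hx : x ∈ insert v S := Finset.mem_coe.1 hx'
    have hy : y ∈ insert v S := Finset.mem_coe.1 hy'
    have keyx : x = u ∨ x = v ∨ x ∈ S.erase u := by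
      rcases Finset.mem_insert.1 hx with h | h
      · exact Or.inr (Or.inl h)
      · by_cases hxu : x = u
        · exact Or.inl hxu
        · exact Or.inr (Or.inr (Finset.mem_erase.2 ⟨hxu, h⟩))
    have keyy : y = u ∨ y = v ∨ y ∈ S.erase u := by
      rcases Finset.mem_insert.1 hy with h | h
      · exact Or.inr (Or.inl h)
      · by_cases hyu : y = u
        · exact Or.inl hyu
        · exact Or.inr (Or.inr (Finset.mem_erase.2 ⟨hyu, h⟩))
    have htb : t ∉ B.erase b0 := fun h => ht (Finset.mem_of_mem_erase h)
    have hb0b : b0 ∉ B.erase b0 := fun h => (Finset.mem_erase.1 h).1 rfl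
    have htb0 : t ≠ b0 := fun h => ht (h ▸ hb0B)
    rcases keyx with rfl | rfl | hxm <;> rcases keyy with rfl | rfl | hym
    · rfl
    · rw [hju, hjv] at hxy; exact absurd hxy htb0
    · rw [hju, hjx y hym] at hxy
      have := hκmem y hym; rw [← hxy] at this; exact absurd this htb
    · rw [hju, hjv] at hxy; exact absurd hxy.symm htb0
    · rfl
    · rw [hjv, hjx y hym] at hxy
      have := hκmem y hym; rw [← hxy] at this; exact absurd this hb0b
    · rw [hju, hjx x hxm] at hxy
      have := hκmem x hxm; rw [hxy] at this; exact absurd this htb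
    · rw [hjv, hjx x hxm] at hxy
      have := hκmem x hxm; rw [hxy] at this; exact absurd this hb0b
    · rw [hjx x hxm, hjx y hym] at hxy
      exact Subtype.ext_iff.1 (κ.injective (Subtype.ext hxy))
  obtain ⟨σ, hσ⟩ := exists_perm_extend (insert v S) j hinj
  refine ⟨ofPerm σ⁻¹ * f * ofPerm σ, ⟨σ, rfl⟩, ?_, ?_⟩
  · have hσu : σ u = t := by rw [hσ u (Finset.mem_insert_of_mem hu), hju]
    have hσv : σ v = b0 := by rw [hσ v (Finset.mem_insert_self v S), hjv]
    rw [conj_apply, hσu, ← hb0, ← hσv]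
    exact σ.symm_apply_apply v
  · intro x hxS hxu
    have hxm : x ∈ S.erase u := Finset.mem_erase.2 ⟨hxu, hxS⟩
    have hσx : σ x ∈ B := by
      rw [hσ x (Finset.mem_insert_of_mem hxS), hjx x hxm]
      exact Finset.mem_of_mem_erase (hκmem x hxm)
    rw [conj_apply, fixes_image f hf _ hσx]
    exact σ.symm_apply_apply x

lemma end_mul_apply {n : ℕ} (a b : Tn n) (x : Fin n) : (a * b) x = a (b x) := rfl

lemma swap_lemma {n : ℕ} (f : Tn n) (hf : f * f = f) (hlt : rnk f < n)
    (u v : Fin n) (S : Finset (Fin n)) (hS : S.card = rnk f) :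
    ∃ c ∈ Subsemigroup.closure (conjClass f), ∀ x ∈ S, c x = Equiv.swap u v x := by
  classical
  by_cases huv : u = v
  · obtain ⟨c, hc, hfix⟩ := fix_lemma f hf S hS
    exact ⟨c, Subsemigroup.subset_closure hc, fun x hx => by
      rw [huv, Equiv.swap_self, hfix x hx]; rfl⟩
  by_cases hu : u ∈ S <;> by_cases hv : v ∈ S
  · -- both in S: use a spare point
    have hw : ∃ w, w ∉ S := by
      by_contra h
      push_neg at h
      have h2 : S = Finset.univ := Finset.eq_univ_iff_forall.2 h
      rw [h2, Finset.card_univ, Fintype.card_fin] at hS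
      omega
    obtain ⟨w, hw⟩ := hw
    have hwu : w ≠ u := fun h => hw (h ▸ hu)
    have hwv : w ≠ v := fun h => hw (h ▸ hv)
    obtain ⟨c1, hc1, hc1u, hc1x⟩ := move_lemma f hf hlt S hS u hu w hw
    set S1 : Finset (Fin n) := insert w (S.erase u) with hS1
    have hr1 : 1 ≤ rnk f := by
      rw [← hS]; exact Finset.card_pos.2 ⟨u, hu⟩
    have hS1card : S1.card = rnk f := by
      rw [hS1, Finset.card_insert_of_notMem (fun h => hw (Finset.mem_of_mem_erase h)),
        Finset.card_erase_of_mem hu, hS]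
      omega
    have hvS1 : v ∈ S1 := Finset.mem_insert_of_mem (Finset.mem_erase.2 ⟨Ne.symm huv, hv⟩)
    have huS1 : u ∉ S1 := by
      rw [hS1, Finset.mem_insert]
      rintro (h | h)
      · exact hwu h.symm
      · exact (Finset.mem_erase.1 h).1 rfl
    obtain ⟨c2, hc2, hc2v, hc2x⟩ := move_lemma f hf hlt S1 hS1card v hvS1 u huS1
    set S2 : Finset (Fin n) := insert u (S1.erase v) with hS2
    have hS2card : S2.card = rnk f := by
      rw [hS2, Finset.card_insert_of_notMem (fun h => huS1 (Finset.mem_of_mem_erase h)),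
        Finset.card_erase_of_mem hvS1, hS1card]
      omega
    have hwS2 : w ∈ S2 :=
      Finset.mem_insert_of_mem (Finset.mem_erase.2 ⟨hwv, Finset.mem_insert_self w _⟩)
    have hvS2 : v ∉ S2 := by
      rw [hS2, Finset.mem_insert]
      rintro (h | h)
      · exact huv h.symm
      · exact (Finset.mem_erase.1 h).1 rfl
    obtain ⟨c3, hc3, hc3w, hc3x⟩ := move_lemma f hf hlt S2 hS2card w hwS2 v hvS2
    refine ⟨c3 * c2 * c1, ?_, ?_⟩
    · exact Subsemigroup.mul_mem _
        (Subsemigroup.mul_mem _ (Subsemigroup.subset_closure hc3)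
          (Subsemigroup.subset_closure hc2)) (Subsemigroup.subset_closure hc1)
    · intro x hx
      rw [end_mul_apply, end_mul_apply]
      by_cases hxu : x = u
      · subst hxu
        rw [hc1u, hc2x w (Finset.mem_insert_self w _) hwv, hc3w, Equiv.swap_apply_left]
      by_cases hxv : x = v
      · subst hxv
        rw [hc1x x hx (fun h => hxu h), hc2v,
          hc3x u (Finset.mem_insert_self u _) (Ne.symm hwu), Equiv.swap_apply_right]
      · have hxS1 : x ∈ S1 := Finset.mem_insert_of_mem (Finset.mem_erase.2 ⟨hxu, hx⟩)
        have hxS2 : x ∈ S2 := Finset.mem_insert_of_mem (Finset.mem_erase.2 ⟨hxv, hxS1⟩)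
        have hxw : x ≠ w := fun h => hw (h ▸ hx)
        rw [hc1x x hx hxu, hc2x x hxS1 hxv, hc3x x hxS2 hxw,
          Equiv.swap_apply_of_ne_of_ne hxu hxv]
  · -- u ∈ S, v ∉ S
    obtain ⟨c, hc, hcu, hcx⟩ := move_lemma f hf hlt S hS u hu v hv
    refine ⟨c, Subsemigroup.subset_closure hc, fun x hx => ?_⟩
    by_cases hxu : x = u
    · subst hxu; rw [hcu, Equiv.swap_apply_left]
    · rw [hcx x hx hxu, Equiv.swap_apply_of_ne_of_ne hxu (fun h => hv (by rwa [h] at hx))]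
  · -- v ∈ S, u ∉ S
    obtain ⟨c, hc, hcv, hcx⟩ := move_lemma f hf hlt S hS v hv u hu
    refine ⟨c, Subsemigroup.subset_closure hc, fun x hx => ?_⟩
    by_cases hxv : x = v
    · subst hxv; rw [hcv, Equiv.swap_apply_right]
    · rw [hcx x hx hxv, Equiv.swap_apply_of_ne_of_ne (fun h => hu (by rwa [h] at hx)) hxv]
  · -- neither
    obtain ⟨c, hc, hfix⟩ := fix_lemma f hf S hS
    refine ⟨c, Subsemigroup.subset_closure hc, fun x hx => ?_⟩
    rw [hfix x hx, Equiv.swap_apply_of_ne_of_ne (fun h => hu (by rwa [h] at hx)) (fun h => hv (by rwa [h] at hx))]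

lemma perm_lemma {n : ℕ} (f : Tn n) (hf : f * f = f) (hlt : rnk f < n)
    (g : Equiv.Perm (Fin n)) :
    ∀ S : Finset (Fin n), S.card = rnk f →
      ∃ c ∈ Subsemigroup.closure (conjClass f), ∀ x ∈ S, c x = g x := by
  classical
  refine Equiv.Perm.swap_induction_on g ?_ ?_
  · intro S hS
    obtain ⟨c, hc, h⟩ := fix_lemma f hf S hS
    exact ⟨c, Subsemigroup.subset_closure hc, fun x hx => by rw [h x hx]; rfl⟩
  · intro g u v huv ih S hS
    obtain ⟨c1, hc1, h1⟩ := ih S hS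
    obtain ⟨c2, hc2, h2⟩ := swap_lemma f hf hlt u v (S.image g)
      (by rw [Finset.card_image_of_injective S g.injective, hS])
    refine ⟨c2 * c1, Subsemigroup.mul_mem _ hc2 hc1, fun x hx => ?_⟩
    rw [end_mul_apply, h1 x hx, h2 (g x) (Finset.mem_image_of_mem g hx)]
    rfl


/-- If `e` is idempotent, `e∘g` is singular and `f` is an idempotent of the same rank,
then `e∘g ∈ e⟨C_f⟩`; in particular `e∘g ∈ ⟨C_e⟩`. -/
theorem stmt9 (n : ℕ) (e : Tn n) (he : e * e = e) (g : Equiv.Perm (Fin n))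
    (ha : ¬ Function.Bijective (ofPerm g * e))
    (f : Tn n) (hf : f * f = f) (hr : rnk f = rnk (ofPerm g * e)) :
    (∃ c ∈ Subsemigroup.closure (conjClass f), ofPerm g * e = c * e) ∧
    ofPerm g * e ∈ Subsemigroup.closure (conjClass e) := by
  classical
  have key : ∀ x, (ofPerm g * e) x = g (e x) := fun _ => rfl
  have himg : Finset.univ.image (ofPerm g * e) = (Finset.univ.image e).image g := by
    exact (Finset.image_image (s := Finset.univ) (f := (e : Fin n → Fin n)) (g := ⇑g)).symm
  have hre : rnk e = rnk (ofPerm g * e) := by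
    rw [rnk, rnk, himg, Finset.card_image_of_injective _ g.injective]
  have hle : rnk (ofPerm g * e) ≤ n := by
    have := Finset.card_le_univ (Finset.univ.image (ofPerm g * e))
    simp only [Fintype.card_fin] at this
    exact this
  have hlt : rnk (ofPerm g * e) < n := by
    rcases hle.lt_or_eq with h | h
    · exact h
    exfalso; apply ha
    apply Finite.surjective_iff_bijective.1
    intro y
    have h2 : Finset.univ.image (ofPerm g * e) = Finset.univ :=
      Finset.eq_univ_of_card _ (by rw [← rnk, h, Fintype.card_fin])
    have hy : y ∈ Finset.univ.image (ofPerm g * e) := by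
      rw [h2]; exact Finset.mem_univ y
    obtain ⟨x, -, hx⟩ := Finset.mem_image.1 hy
    exact ⟨x, hx⟩
  have part1 : ∀ f' : Tn n, f' * f' = f' → rnk f' = rnk (ofPerm g * e) →
      ∃ c ∈ Subsemigroup.closure (conjClass f'), ofPerm g * e = c * e := by
    intro f' hf' hr'
    obtain ⟨c, hc, hcx⟩ := perm_lemma f' hf' (by rw [hr']; exact hlt) g
      (Finset.univ.image e)
      (by rw [show (Finset.univ.image e).card = rnk e from rfl, hre, ← hr'])
    refine ⟨c, hc, ?_⟩
    funext x
    rw [key x, end_mul_apply, hcx (e x) (Finset.mem_image_of_mem e (Finset.mem_univ x))]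
  obtain ⟨c', hc', hceq'⟩ := part1 e he hre
  refine ⟨part1 f hf hr, ?_⟩
  rw [hceq']
  exact Subsemigroup.mul_mem _ hc' (Subsemigroup.subset_closure ⟨1, rfl⟩)
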